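/- arXiv:2108.02883 — 5 statements merged into one kernel-verified Lean document; each statement's English description precedes it below -/
import Mathlib

section
/- Let Z₁, Z₂ be independent standard Gaussians and β = (β₁, β₂) with β₁² + β₂² = 1 and β₂ ≥ 0. Then P(β₁Z₁ + β₂Z₂ ≤ 0 | Z₁ ≥ 0) = (1/π)·arccos(β₁). -/
open MeasureTheory ProbabilityTheory Real

noncomputable def stdGauss (d : ℕ) : Measure (Fin d → ℝ) :=
  Measure.pi fun _ => gaussianReal 0 1

open Set Filter
open scoped NNReal ENNReal

private lemma aux_key_iff {α θ : ℝ} (hα0 : 0 ≤ α) (hαπ : α ≤ π)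
    (hθ1 : -π < θ) (hθ2 : θ < π)
    (h1 : θ ≠ -(π/2)) (h2 : θ ≠ π/2) (h3 : θ ≠ α - π/2) :
    (0 ≤ Real.cos θ ∧ Real.cos (θ - α) ≤ 0) ↔ (-(π/2) < θ ∧ θ < α - π/2) := by
  have hπ := Real.pi_pos
  constructor
  · rintro ⟨hc, hca⟩
    have hl : -(π/2) < θ := by
      rcases lt_trichotomy θ (-(π/2)) with hlt | heq | hgt
      · exfalso
        have : Real.cos (-θ) < 0 :=
          Real.cos_neg_of_pi_div_two_lt_of_lt (by linarith) (by linarith)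
        rw [Real.cos_neg] at this; linarith
      · exact absurd heq h1
      · exact hgt
    have hr : θ < π/2 := by
      rcases lt_trichotomy θ (π/2) with hlt | heq | hgt
      · exact hlt
      · exact absurd heq h2
      · exfalso
        have : Real.cos θ < 0 :=
          Real.cos_neg_of_pi_div_two_lt_of_lt hgt (by linarith)
        linarith
    refine ⟨hl, ?_⟩
    by_contra hge
    push_neg at hge
    have hgt : α - π/2 < θ := lt_of_le_of_ne hge (fun e => h3 e.symm)
    have : 0 < Real.cos (θ - α) :=
      Real.cos_pos_of_mem_Ioo ⟨by linarith, by linarith⟩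
    linarith
  · rintro ⟨hl, hr⟩
    refine ⟨Real.cos_nonneg_of_mem_Icc ⟨by linarith, by linarith⟩, ?_⟩
    have hcc : Real.cos (θ - α) = Real.cos (α - θ) := by
      rw [← Real.cos_neg, neg_sub]
    have : Real.cos (α - θ) < 0 :=
      Real.cos_neg_of_pi_div_two_lt_of_lt (by linarith) (by linarith)
    linarith [hcc]

private lemma aux_int_r : ∫ r in Set.Ioi (0:ℝ), r * Real.exp (-(1/2) * r ^ 2) = 1 := by
  have hderiv : ∀ x ∈ Set.Ici (0:ℝ),
      HasDerivAt (fun r : ℝ => -Real.exp (-(1/2) * r ^ 2)) (x * Real.exp (-(1/2) * x ^ 2)) x := by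
    intro x _
    have h1 : HasDerivAt (fun r : ℝ => -(1/2) * r ^ 2) (-(1/2) * (2 * x ^ 1)) x :=
      (hasDerivAt_pow 2 x).const_mul (-(1/2) : ℝ)
    have h2 := (h1.exp).neg
    refine h2.congr_deriv ?_
    ring
  have hint : IntegrableOn (fun r : ℝ => r * Real.exp (-(1/2) * r ^ 2)) (Set.Ioi 0) :=
    (integrable_mul_exp_neg_mul_sq (b := (1/2:ℝ)) (by norm_num)).integrableOn
  have htend : Tendsto (fun r : ℝ => -Real.exp (-(1/2) * r ^ 2)) atTop (nhds 0) := by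
    have h1 : Tendsto (fun r : ℝ => (1/2) * r ^ 2) atTop atTop :=
      Tendsto.const_mul_atTop (by norm_num) (tendsto_pow_atTop two_ne_zero)
    have h2 : Tendsto (fun r : ℝ => Real.exp (-((1/2) * r ^ 2))) atTop (nhds 0) :=
      Real.tendsto_exp_neg_atTop_nhds_zero.comp h1
    have h3 := h2.neg
    rw [neg_zero] at h3
    exact h3.congr (fun r => by rw [neg_mul])
  have hres := integral_Ioi_of_hasDerivAt_of_tendsto' hderiv hint htend
  rw [hres]
  norm_num

private lemma aux_pdf_mul (x y : ℝ) :
    gaussianPDFReal 0 1 x * gaussianPDFReal 0 1 y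
      = (2*π)⁻¹ * Real.exp (-(1/2) * (x ^ 2 + y ^ 2)) := by
  have h2π : (0:ℝ) ≤ 2 * π := by positivity
  simp only [gaussianPDFReal, NNReal.coe_one, mul_one, sub_zero]
  rw [mul_mul_mul_comm, ← mul_inv, Real.mul_self_sqrt h2π, ← Real.exp_add]
  congr 1
  ring

private lemma aux_prod_apply (S : Set (ℝ × ℝ)) (hS : MeasurableSet S) :
    ((gaussianReal 0 1).prod (gaussianReal 0 1)) S
      = ENNReal.ofReal
          (∫ p in S, gaussianPDFReal 0 1 p.1 * gaussianPDFReal 0 1 p.2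
            ∂(volume.prod volume)) := by
  have hmeas := measurable_gaussianPDF (0:ℝ) 1
  have hprod : (gaussianReal 0 1).prod (gaussianReal 0 1)
      = (volume.prod volume).withDensity
          (fun p => gaussianPDF 0 1 p.1 * gaussianPDF 0 1 p.2) := by
    refine Measure.prod_eq fun s t hs ht => ?_
    rw [withDensity_apply _ (hs.prod ht), ← Measure.prod_restrict,
      lintegral_prod_mul hmeas.aemeasurable hmeas.aemeasurable,
      ← gaussianReal_apply _ one_ne_zero s, ← gaussianReal_apply _ one_ne_zero t]
  rw [hprod, withDensity_apply _ hS]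
  have heq : ∀ p : ℝ × ℝ, gaussianPDF 0 1 p.1 * gaussianPDF 0 1 p.2
      = ENNReal.ofReal (gaussianPDFReal 0 1 p.1 * gaussianPDFReal 0 1 p.2) := fun p => by
    simp only [gaussianPDF]
    rw [← ENNReal.ofReal_mul (gaussianPDFReal_nonneg _ _ _)]
  simp_rw [heq]
  rw [← ofReal_integral_eq_lintegral_ofReal]
  · exact ((integrable_gaussianPDFReal 0 1).mul_prod (integrable_gaussianPDFReal 0 1)).restrict
  · exact ae_of_all _ fun p => mul_nonneg (gaussianPDFReal_nonneg _ _ _) (gaussianPDFReal_nonneg _ _ _)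

private lemma aux_gauss_Ici : gaussianReal 0 1 (Set.Ici (0:ℝ)) = 1/2 := by
  have hG : IsProbabilityMeasure (gaussianReal (0:ℝ) 1) := inferInstance
  have hmap := gaussianReal_map_const_mul (μ := (0:ℝ)) (v := 1) (-1)
  have hv : (⟨(-1:ℝ)^2, sq_nonneg _⟩ : ℝ≥0) * 1 = 1 := by
    ext; norm_num
  replace hmap : Measure.map (fun x => -1 * x) (gaussianReal 0 1) = gaussianReal 0 1 := by
    rw [hmap]; congr 1
    · ring
  have hsym : gaussianReal 0 1 (Set.Iic (0:ℝ)) = gaussianReal 0 1 (Set.Ici (0:ℝ)) := by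
    conv_lhs => rw [← hmap]
    rw [Measure.map_apply (measurable_id'.const_mul _) measurableSet_Iic]
    congr 1
    ext x
    simp only [Set.mem_preimage, Set.mem_Iic, Set.mem_Ici]
    constructor <;> intro hx <;> nlinarith
  have hzero : gaussianReal 0 1 ({0} : Set ℝ) = 0 := by
    refine gaussianReal_absolutelyContinuous 0 one_ne_zero ?_
    simp
  have hIio : gaussianReal 0 1 (Set.Iio (0:ℝ)) = gaussianReal 0 1 (Set.Iic (0:ℝ)) := by
    rw [← Set.Iio_union_right (a := (0:ℝ))] at *
    rw [measure_union (by simp) (measurableSet_singleton 0), hzero, add_zero]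
  have huniv : gaussianReal 0 1 (Set.Iio (0:ℝ)) + gaussianReal 0 1 (Set.Ici (0:ℝ)) = 1 := by
    rw [← measure_union (by simp [Set.disjoint_left]) measurableSet_Ici]
    simp
  rw [hIio, hsym] at huniv
  have hfin : gaussianReal 0 1 (Set.Ici (0:ℝ)) ≠ ⊤ := measure_ne_top _ _
  have := huniv
  rw [← two_mul] at this
  rw [ENNReal.eq_div_iff (by norm_num) (by norm_num)]
  exact this

/-- For independent standard Gaussians `Z₁, Z₂` and a unit vector `β = (β₁, β₂)`
with `β₂ ≥ 0`, `P(β₁Z₁ + β₂Z₂ ≤ 0 | Z₁ ≥ 0) = arccos(β₁)/π`. -/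
theorem stmt5 (β₁ β₂ : ℝ) (h : β₁^2 + β₂^2 = 1) (hβ₂ : 0 ≤ β₂) :
    (((stdGauss 2)[|{z | 0 ≤ z 0}]) {z | β₁ * z 0 + β₂ * z 1 ≤ 0}).toReal
      = (1/π) * Real.arccos β₁ := by
  have hπ := Real.pi_pos
  set α := Real.arccos β₁ with hαdef
  have hβ₁l : -1 ≤ β₁ := by nlinarith [sq_nonneg β₂, sq_nonneg (β₁ + 1)]
  have hβ₁r : β₁ ≤ 1 := by nlinarith [sq_nonneg β₂, sq_nonneg (β₁ - 1)]
  have hα0 : 0 ≤ α := Real.arccos_nonneg β₁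
  have hαπ : α ≤ π := Real.arccos_le_pi β₁
  have hcosα : Real.cos α = β₁ := Real.cos_arccos hβ₁l hβ₁r
  have hsinα : Real.sin α = β₂ := by
    rw [hαdef, Real.sin_arccos, show 1 - β₁^2 = β₂^2 by linarith]
    exact Real.sqrt_sq hβ₂
  set A : Set (Fin 2 → ℝ) := {z | 0 ≤ z 0} with hA
  set B : Set (Fin 2 → ℝ) := {z | β₁ * z 0 + β₂ * z 1 ≤ 0} with hB
  have hAm : MeasurableSet A :=
    measurableSet_le measurable_const (measurable_pi_apply 0)
  have hBm : MeasurableSet B := measurableSet_le (by fun_prop) measurable_const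
  set S' : Set (ℝ × ℝ) := {p | 0 ≤ p.1} ∩ {p | β₁ * p.1 + β₂ * p.2 ≤ 0} with hS'
  have hS'm : MeasurableSet S' :=
    (measurableSet_le measurable_const measurable_fst).inter
      (measurableSet_le (by fun_prop) measurable_const)
  have hmp := measurePreserving_finTwoArrow (α := ℝ) (gaussianReal 0 1)
  -- the conditioning event has probability 1/2
  have hA2 : (stdGauss 2) A = 1/2 := by
    have hpre : MeasurableEquiv.finTwoArrow ⁻¹' (Set.Ici (0:ℝ) ×ˢ Set.univ) = A := by
      ext z
      simp [A, MeasurableEquiv.finTwoArrow_apply]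
    have : ((gaussianReal 0 1).prod (gaussianReal 0 1)) (Set.Ici (0:ℝ) ×ˢ Set.univ)
        = (stdGauss 2) A := by
      rw [← hmp.map_eq,
        Measure.map_apply (MeasurableEquiv.measurable _)
          (measurableSet_Ici.prod MeasurableSet.univ), hpre]
      rfl
    rw [← this, Measure.prod_prod, aux_gauss_Ici]
    simp
  -- the intersection probability
  have hpre2 : MeasurableEquiv.finTwoArrow ⁻¹' S' = A ∩ B := by
    ext z
    simp [S', A, B, MeasurableEquiv.finTwoArrow_apply]
  have hABval : (stdGauss 2) (A ∩ B)
      = ((gaussianReal 0 1).prod (gaussianReal 0 1)) S' := by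
    rw [← hmp.map_eq, Measure.map_apply (MeasurableEquiv.measurable _) hS'm, hpre2]
    rfl
  -- compute the integral over S'
  have hJ : (∫ p in S', gaussianPDFReal 0 1 p.1 * gaussianPDFReal 0 1 p.2
      ∂(volume.prod volume)) = (2*π)⁻¹ * α := by
    rw [← Measure.volume_eq_prod, ← integral_indicator hS'm,
      ← integral_comp_polarCoord_symm
        (fun p => S'.indicator (fun q => gaussianPDFReal 0 1 q.1 * gaussianPDFReal 0 1 q.2) p),
      polarCoord_target]
    have hnull : (volume : Measure (ℝ × ℝ))
        {p | p.2 = -(π/2) ∨ p.2 = π/2 ∨ p.2 = α - π/2} = 0 := by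
      have hset : {p : ℝ × ℝ | p.2 = -(π/2) ∨ p.2 = π/2 ∨ p.2 = α - π/2}
          = Set.univ ×ˢ ({-(π/2), π/2, α - π/2} : Set ℝ) := by
        ext p
        simp [Set.mem_prod]
      rw [hset, Measure.volume_eq_prod, Measure.prod_prod]
      have : (volume : Measure ℝ) ({-(π/2), π/2, α - π/2} : Set ℝ) = 0 :=
        Set.Finite.measure_zero (Set.toFinite _) _
      simp [this]
    have hcongr : ∫ p in Set.Ioi (0:ℝ) ×ˢ Set.Ioo (-π) π,
          p.1 • S'.indicator (fun q => gaussianPDFReal 0 1 q.1 * gaussianPDFReal 0 1 q.2)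
            (polarCoord.symm p)
        = ∫ p in Set.Ioi (0:ℝ) ×ˢ Set.Ioo (-π) π,
          (fun r => r * Real.exp (-(1/2) * r ^ 2)) p.1 *
            (fun t => (2*π)⁻¹ * (Set.Ioo (-(π/2)) (α - π/2)).indicator 1 t) p.2 := by
      refine setIntegral_congr_ae (measurableSet_Ioi.prod measurableSet_Ioo) ?_
      filter_upwards [measure_eq_zero_iff_ae_notMem.mp hnull] with p hp hmem
      push_neg at hp
      obtain ⟨hp1, hp2, hp3⟩ := hp
      have hr0 : (0:ℝ) < p.1 := hmem.1
      have hθ := hmem.2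
      have hiff := aux_key_iff hα0 hαπ hθ.1 hθ.2 hp1 hp2 hp3
      have hlin : β₁ * (p.1 * Real.cos p.2) + β₂ * (p.1 * Real.sin p.2)
          = p.1 * Real.cos (p.2 - α) := by
        rw [Real.cos_sub, ← hcosα, ← hsinα]
        ring
      have hmemS : ((p.1 * Real.cos p.2, p.1 * Real.sin p.2) ∈ S')
          ↔ (0 ≤ Real.cos p.2 ∧ Real.cos (p.2 - α) ≤ 0) := by
        simp only [S', Set.mem_inter_iff, Set.mem_setOf_eq, hlin]
        constructor
        · rintro ⟨h1', h2'⟩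
          constructor
          · by_contra hc
            push_neg at hc
            nlinarith
          · by_contra hc
            push_neg at hc
            nlinarith
        · rintro ⟨h1', h2'⟩
          constructor
          · exact mul_nonneg hr0.le h1'
          · nlinarith
      rw [polarCoord_symm_apply]
      by_cases hmem2 : p.2 ∈ Set.Ioo (-(π/2)) (α - π/2)
      · rw [Set.indicator_of_mem (hmemS.mpr (hiff.mpr ⟨hmem2.1, hmem2.2⟩)),
          Set.indicator_of_mem hmem2, aux_pdf_mul]
        have hxy : (p.1 * Real.cos p.2) ^ 2 + (p.1 * Real.sin p.2) ^ 2 = p.1 ^ 2 := by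
          have := Real.sin_sq_add_cos_sq p.2
          nlinarith
        rw [hxy, smul_eq_mul]
        simp only [Pi.one_apply]
        ring
      · rw [Set.indicator_of_notMem hmem2,
          Set.indicator_of_notMem (fun hc => hmem2 ⟨(hiff.mp (hmemS.mp hc)).1,
            (hiff.mp (hmemS.mp hc)).2⟩)]
        simp
    have hfub := MeasureTheory.setIntegral_prod_mul (μ := (volume : Measure ℝ))
      (ν := (volume : Measure ℝ))
      (f := fun r : ℝ => r * Real.exp (-(1/2) * r ^ 2))
      (g := fun t : ℝ => (2*π)⁻¹ * (Set.Ioo (-(π/2)) (α - π/2)).indicator 1 t)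
      (Set.Ioi 0) (Set.Ioo (-π) π)
    rw [hcongr, Measure.volume_eq_prod, hfub, aux_int_r, one_mul]
    rw [integral_const_mul,
      setIntegral_indicator measurableSet_Ioo,
      Set.inter_eq_self_of_subset_right (Set.Ioo_subset_Ioo (by linarith) (by linarith))]
    simp only [Pi.one_apply]
    rw [setIntegral_const, smul_eq_mul, mul_one, Real.volume_real_Ioo,
      show α - π/2 - -(π/2) = α by ring, max_eq_left hα0]
  have hAB : (stdGauss 2) (A ∩ B) = ENNReal.ofReal ((2*π)⁻¹ * α) := by
    rw [hABval, aux_prod_apply S' hS'm, hJ]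
  -- put everything together
  rw [ProbabilityTheory.cond_apply hAm, hA2, hAB]
  rw [ENNReal.toReal_mul, ENNReal.toReal_inv, ENNReal.toReal_ofReal
    (by positivity), ENNReal.toReal_div]
  simp only [ENNReal.toReal_one, ENNReal.toReal_ofNat]
  rw [show ((1:ℝ)/2)⁻¹ = 2 by norm_num]
  field_simp
end

section
/- For ε > 0 and the squared loss, the inconsistent adversarial training loss (1/n)·Σᵢ max_{‖δᵢ‖₂≤ε} (yᵢ − ⟨xᵢ + δᵢ, θ⟩)² equals (1/n)·Σᵢ(yᵢ − ⟨xᵢ,θ⟩)² + ε²‖θ‖₂² + (2ε/n)·‖θ‖₂·Σᵢ|yᵢ − ⟨xᵢ,θ⟩|. -/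
open Real

noncomputable def ip {d : ℕ} (x y : Fin d → ℝ) : ℝ := ∑ i, x i * y i
noncomputable def norm2 {d : ℕ} (x : Fin d → ℝ) : ℝ := Real.sqrt (∑ i, (x i)^2)

lemma norm2_nonneg {d : ℕ} (x : Fin d → ℝ) : 0 ≤ norm2 x := Real.sqrt_nonneg _

lemma norm2_sq {d : ℕ} (x : Fin d → ℝ) : norm2 x ^ 2 = ∑ i, (x i)^2 :=
  Real.sq_sqrt (Finset.sum_nonneg fun i _ => sq_nonneg _)

lemma abs_ip_le {d : ℕ} (δ θ : Fin d → ℝ) : |ip δ θ| ≤ norm2 δ * norm2 θ := by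
  rw [abs_le]
  constructor
  · have h := Real.sum_mul_le_sqrt_mul_sqrt Finset.univ (fun i => -δ i) θ
    simp only [neg_sq, neg_mul, Finset.sum_neg_distrib] at h
    have : -(norm2 δ * norm2 θ) ≤ -(-ip δ θ) := by
      simpa [ip, norm2] using neg_le_neg h
    simpa using this
  · simpa [ip, norm2] using Real.sum_mul_le_sqrt_mul_sqrt Finset.univ δ θ

lemma key {d : ℕ} (ε : ℝ) (hε : 0 < ε) (a : Fin d → ℝ) (b : ℝ) (θ : Fin d → ℝ) :
    sSup ((fun δ => (b - ip (a + δ) θ)^2) '' {δ : Fin d → ℝ | norm2 δ ≤ ε})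
      = (|b - ip a θ| + ε * norm2 θ)^2 := by
  set r := b - ip a θ with hr
  have hsplit : ∀ δ : Fin d → ℝ, b - ip (a + δ) θ = r - ip δ θ := by
    intro δ
    simp only [hr, ip, Pi.add_apply, add_mul, Finset.sum_add_distrib]
    ring
  have htn : 0 ≤ norm2 θ := norm2_nonneg θ
  apply IsGreatest.csSup_eq
  constructor
  · -- membership
    by_cases hθ : (∑ i, (θ i)^2) = 0
    · refine ⟨0, ?_, ?_⟩
      · simp [Set.mem_setOf_eq, norm2, le_of_lt hε]
      · have h2 : norm2 θ = 0 := by simp [norm2, hθ]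
        have h3 : ip (0 : Fin d → ℝ) θ = 0 := by simp [ip]
        dsimp only
        rw [hsplit, h3, h2]
        simp [sq_abs]
    · have hpos : 0 < ∑ i, (θ i)^2 :=
        lt_of_le_of_ne (Finset.sum_nonneg fun i _ => sq_nonneg _) (Ne.symm hθ)
      have htpos : 0 < norm2 θ := Real.sqrt_pos.2 hpos
      set s : ℝ := if 0 ≤ r then 1 else -1 with hs
      have hsabs : |s| = 1 := by
        rw [hs]; split <;> simp
      refine ⟨fun i => (-s * ε / norm2 θ) * θ i, ?_, ?_⟩
      · -- norm of δ₀
        have : norm2 (fun i => (-s * ε / norm2 θ) * θ i)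
            = |(-s * ε / norm2 θ)| * norm2 θ := by
          simp only [norm2, mul_pow, ← Finset.mul_sum]
          rw [Real.sqrt_mul (sq_nonneg _), Real.sqrt_sq_eq_abs]
        rw [Set.mem_setOf_eq, this, abs_div, abs_mul, abs_neg, hsabs, one_mul,
          abs_of_pos hε, abs_of_pos htpos, div_mul_cancel₀ _ (ne_of_gt htpos)]
      · dsimp only
        rw [hsplit]
        have hipδ : ip (fun i => (-s * ε / norm2 θ) * θ i) θ
            = (-s * ε / norm2 θ) * ∑ i, (θ i)^2 := by
          simp [ip, Finset.mul_sum, mul_assoc, sq]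
        have hsum : (∑ i, (θ i)^2) = norm2 θ ^ 2 := (norm2_sq θ).symm
        rw [hipδ, hsum]
        have : (-s * ε / norm2 θ) * norm2 θ ^ 2 = -s * ε * norm2 θ := by
          field_simp
        rw [this]
        rw [hs]
        split
        · next h => rw [abs_of_nonneg h]; ring
        · next h =>
            rw [abs_of_neg (lt_of_not_ge h)]; ring
  · -- upper bound
    rintro v ⟨δ, hδ, rfl⟩
    rw [Set.mem_setOf_eq] at hδ
    dsimp only
    rw [hsplit]
    have h1 : |r - ip δ θ| ≤ |r| + ε * norm2 θ := by
      calc |r - ip δ θ| ≤ |r| + |ip δ θ| := abs_sub _ _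
        _ ≤ |r| + norm2 δ * norm2 θ := by linarith [abs_ip_le δ θ]
        _ ≤ |r| + ε * norm2 θ := by nlinarith [norm2_nonneg δ]
    calc (r - ip δ θ)^2 = |r - ip δ θ|^2 := (sq_abs _).symm
      _ ≤ (|r| + ε * norm2 θ)^2 := by
          apply pow_le_pow_left₀ (abs_nonneg _) h1

/-- The inconsistent ℓ₂ adversarial training loss for the squared loss equals the
standard loss plus a ridge penalty `ε²‖θ‖₂²` plus a cross term. -/
theorem stmt9 (d n : ℕ) (hn : 0 < n) (ε : ℝ) (hε : 0 < ε)
    (x : Fin n → Fin d → ℝ) (y : Fin n → ℝ) (θ : Fin d → ℝ) :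
    (1/(n:ℝ)) * ∑ i, sSup ((fun δ => (y i - ip (x i + δ) θ)^2) ''
        {δ : Fin d → ℝ | norm2 δ ≤ ε})
      = (1/(n:ℝ)) * ∑ i, (y i - ip (x i) θ)^2 + ε^2 * norm2 θ ^ 2
        + (2*ε/(n:ℝ)) * norm2 θ * ∑ i, |y i - ip (x i) θ| := by
  have hrw : ∀ i : Fin n, sSup ((fun δ => (y i - ip (x i + δ) θ)^2) ''
        {δ : Fin d → ℝ | norm2 δ ≤ ε}) = (|y i - ip (x i) θ| + ε * norm2 θ)^2 :=
    fun i => key ε hε (x i) (y i) θ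
  rw [Finset.sum_congr rfl (fun i _ => hrw i)]
  have hexp : ∀ i : Fin n, (|y i - ip (x i) θ| + ε * norm2 θ)^2
      = (y i - ip (x i) θ)^2 + (ε * norm2 θ)^2
        + 2 * (ε * norm2 θ) * |y i - ip (x i) θ| := by
    intro i
    have := sq_abs (y i - ip (x i) θ)
    nlinarith [sq_abs (y i - ip (x i) θ)]
  rw [Finset.sum_congr rfl (fun i _ => hexp i)]
  rw [Finset.sum_add_distrib, Finset.sum_add_distrib, Finset.sum_const,
    Finset.card_univ, Fintype.card_fin, ← Finset.mul_sum]
  have hn' : (n : ℝ) ≠ 0 := by positivity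
  field_simp
  ring
end

section
/- Let f : R → R be convex, x ∈ R, t > 0, and let M_f(x,t) = min_y [(x−y)²/(2t) + f(y)] be the Moreau envelope with proximal operator prox_f(x,t) = argmin_y [f(y) + (y−x)²/(2t)]. Then ∂M_f/∂x (x,t) = (x − prox_f(x,t))/t and ∂M_f/∂t (x,t) = −(x − prox_f(x,t))²/(2t²). -/
set_option maxHeartbeats 1000000

open Real

section MoreauAux

open Asymptotics Filter

/-- Strong-convexity type lower bound at the proximal point. -/
private lemma moreau_strongmin (f : ℝ → ℝ) (hf : ConvexOn ℝ Set.univ f)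
    (prox : ℝ → ℝ → ℝ)
    (hproxmin : ∀ x t, 0 < t →
      ∀ y : ℝ, f (prox x t) + (prox x t - x)^2/(2*t) ≤ f y + (y - x)^2/(2*t))
    (x t : ℝ) (ht : 0 < t) (y : ℝ) :
    f (prox x t) + (prox x t - x)^2/(2*t) + (y - prox x t)^2/(4*t)
      ≤ f y + (y - x)^2/(2*t) := by
  set p := prox x t with hp
  have h1 := hproxmin x t ht ((y + p)/2)
  have h2 := hf.2 (Set.mem_univ y) (Set.mem_univ p)
    (by norm_num : (0:ℝ) ≤ 1/2) (by norm_num : (0:ℝ) ≤ 1/2) (by norm_num)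
  simp only [smul_eq_mul] at h2
  have hm : (1:ℝ)/2 * y + 1/2 * p = (y + p)/2 := by ring
  rw [hm] at h2
  have hid : ((y + p)/2 - x)^2/(2*t) =
      (y - x)^2/(4*t) + (p - x)^2/(4*t) - (y - p)^2/(8*t) := by
    field_simp
    ring
  rw [hid] at h1
  have e1 : (p - x)^2/(2*t) = (p - x)^2/(4*t) + (p - x)^2/(4*t) := by ring
  have e2 : (y - x)^2/(2*t) = (y - x)^2/(4*t) + (y - x)^2/(4*t) := by ring
  have e3 : (y - p)^2/(4*t) = (y - p)^2/(8*t) + (y - p)^2/(8*t) := by ring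
  linarith

/-- The infimum defining the Moreau envelope is attained at the prox point. -/
private lemma moreau_Mval (f : ℝ → ℝ)
    (M : ℝ → ℝ → ℝ)
    (hM : ∀ x t, M x t = ⨅ y : ℝ, ((x - y)^2/(2*t) + f y))
    (prox : ℝ → ℝ → ℝ)
    (hproxmin : ∀ x t, 0 < t →
      ∀ y : ℝ, f (prox x t) + (prox x t - x)^2/(2*t) ≤ f y + (y - x)^2/(2*t))
    (x t : ℝ) (ht : 0 < t) :
    M x t = f (prox x t) + (prox x t - x)^2/(2*t) := by
  rw [hM]
  have hbdd : BddBelow (Set.range fun y : ℝ => (x - y)^2/(2*t) + f y) := by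
    refine ⟨f (prox x t) + (prox x t - x)^2/(2*t), ?_⟩
    rintro _ ⟨y, rfl⟩
    have := hproxmin x t ht y
    have hsq : (x - y)^2 = (y - x)^2 := by ring
    simp only [hsq]
    linarith
  apply le_antisymm
  · have := ciInf_le hbdd (prox x t)
    have hsq : (x - prox x t)^2 = (prox x t - x)^2 := by ring
    rw [hsq] at this
    linarith
  · apply le_ciInf
    intro y
    have := hproxmin x t ht y
    have hsq : (x - y)^2 = (y - x)^2 := by ring
    simp only [hsq]
    linarith

/-- Lipschitz property of prox in the base point. -/
private lemma moreau_lipx (f : ℝ → ℝ) (hf : ConvexOn ℝ Set.univ f)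
    (prox : ℝ → ℝ → ℝ)
    (hproxmin : ∀ x t, 0 < t →
      ∀ y : ℝ, f (prox x t) + (prox x t - x)^2/(2*t) ≤ f y + (y - x)^2/(2*t))
    (x x' t : ℝ) (ht : 0 < t) :
    |prox x' t - prox x t| ≤ 2 * |x' - x| := by
  set p := prox x t
  set p' := prox x' t
  have k1 := moreau_strongmin f hf prox hproxmin x t ht p'
  have k2 := moreau_strongmin f hf prox hproxmin x' t ht p
  have hsum : (p'-p)^2/(4*t) + (p-p')^2/(4*t) ≤
      ((p'-x)^2 - (p'-x')^2 + (p-x')^2 - (p-x)^2)/(2*t) := by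
    have e : ((p'-x)^2 - (p'-x')^2 + (p-x')^2 - (p-x)^2)/(2*t)
        = ((p'-x)^2/(2*t) - (p'-x')^2/(2*t)) + ((p-x')^2/(2*t) - (p-x)^2/(2*t)) := by ring
    rw [e]; linarith
  have hq : (p'-p)^2 ≤ 2*(x'-x)*(p'-p) := by
    have e2 : ((p'-x)^2 - (p'-x')^2 + (p-x')^2 - (p-x)^2) = 2*(x'-x)*(p'-p) := by ring
    rw [e2] at hsum
    have e3 : (p'-p)^2/(4*t) + (p-p')^2/(4*t) = (p'-p)^2/(2*t) := by ring
    rw [e3] at hsum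
    calc (p'-p)^2 = ((p'-p)^2/(2*t))*(2*t) := by field_simp
    _ ≤ (2*(x'-x)*(p'-p)/(2*t))*(2*t) := by
        apply mul_le_mul_of_nonneg_right hsum (by linarith)
    _ = 2*(x'-x)*(p'-p) := by field_simp
  have habs : 2*(x'-x)*(p'-p) ≤ 2 * |x' - x| * |p' - p| := by
    have : (x'-x)*(p'-p) ≤ |x' - x| * |p' - p| := by
      rw [← abs_mul]; exact le_abs_self _
    linarith
  nlinarith [sq_abs (p'-p), abs_nonneg (p'-p), abs_nonneg (x'-x)]

/-- Quadratic remainder bound in the `x` variable. -/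
private lemma moreau_remx (f : ℝ → ℝ) (M : ℝ → ℝ → ℝ)
    (prox : ℝ → ℝ → ℝ)
    (hproxmin : ∀ x t, 0 < t →
      ∀ y : ℝ, f (prox x t) + (prox x t - x)^2/(2*t) ≤ f y + (y - x)^2/(2*t))
    (hMval : ∀ x t, 0 < t → M x t = f (prox x t) + (prox x t - x)^2/(2*t))
    (x x' t : ℝ) (ht : 0 < t)
    (hlip : |prox x' t - prox x t| ≤ 2 * |x' - x|) :
    |M x' t - M x t - (x'-x) * ((x - prox x t)/t)| ≤ (2/t) * (x'-x)^2 := by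
  set p := prox x t with hp
  set p' := prox x' t with hp'
  have hM1 := hMval x t ht
  have hM2 := hMval x' t ht
  have hub : M x' t - M x t ≤ ((p-x')^2 - (p-x)^2)/(2*t) := by
    have := hproxmin x' t ht p
    rw [hM1, hM2]
    have e : ((p-x')^2 - (p-x)^2)/(2*t) = (p-x')^2/(2*t) - (p-x)^2/(2*t) := by ring
    rw [e]; linarith
  have hlb : M x t - M x' t ≤ ((p'-x)^2 - (p'-x')^2)/(2*t) := by
    have := hproxmin x t ht p'
    rw [hM1, hM2]
    have e : ((p'-x)^2 - (p'-x')^2)/(2*t) = (p'-x)^2/(2*t) - (p'-x')^2/(2*t) := by ring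
    rw [e]; linarith
  rw [abs_le]
  constructor
  · have key : -(M x' t - M x t - (x'-x) * ((x - p)/t)) ≤
        (x'-x)*(p'-p)/t - (x'-x)^2/(2*t) := by
      have e : ((p'-x)^2 - (p'-x')^2)/(2*t) + (x'-x) * ((x - p)/t)
          = (x'-x)*(p'-p)/t - (x'-x)^2/(2*t) := by
        field_simp; ring
      linarith [hlb, e.ge, e.le]
    have hb : (x'-x)*(p'-p)/t ≤ 2*(x'-x)^2/t := by
      have h1 : (x'-x)*(p'-p) ≤ |x' - x| * |p' - p| := by
        rw [← abs_mul]; exact le_abs_self _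
      have h2 : |x' - x| * |p' - p| ≤ |x' - x| * (2 * |x' - x|) :=
        mul_le_mul_of_nonneg_left hlip (abs_nonneg _)
      have h3 : |x' - x| * (2 * |x' - x|) = 2*(x'-x)^2 := by
        rw [mul_comm, mul_assoc, ← abs_mul]
        rw [abs_of_nonneg (mul_self_nonneg _)]
        ring
      have h6 : (x'-x)*(p'-p) ≤ 2*(x'-x)^2 := by linarith
      exact div_le_div_of_nonneg_right h6 ht.le
    have heq : 2*(x'-x)^2/t = (2/t)*(x'-x)^2 := by ring
    have hposq : 0 ≤ (x'-x)^2/(2*t) := by positivity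
    linarith
  · have e : ((p-x')^2 - (p-x)^2)/(2*t) - (x'-x) * ((x - p)/t) = (x'-x)^2/(2*t) := by
      field_simp; ring
    have : M x' t - M x t - (x'-x) * ((x - p)/t) ≤ (x'-x)^2/(2*t) := by linarith [hub, e.le, e.ge]
    have h4 : (2/t)*(x'-x)^2 - (x'-x)^2/(2*t) = (3/(2*t))*(x'-x)^2 := by ring
    have h5 : 0 ≤ (3/(2*t))*(x'-x)^2 := by positivity
    linarith

/-- Local Lipschitz property of prox in the parameter `t`. -/
private lemma moreau_lipt (f : ℝ → ℝ) (hf : ConvexOn ℝ Set.univ f)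
    (prox : ℝ → ℝ → ℝ)
    (hproxmin : ∀ x t, 0 < t →
      ∀ y : ℝ, f (prox x t) + (prox x t - x)^2/(2*t) ≤ f y + (y - x)^2/(2*t))
    (x t t' : ℝ) (ht : 0 < t) (ht8 : |t' - t| < t/8) :
    |prox x t' - prox x t| ≤ 7 * |prox x t - x| * |t' - t| / t := by
  have habs := abs_lt.mp ht8
  have ht' : 0 < t' := by linarith
  have h7 : 7*t/8 ≤ t' := by linarith
  set p := prox x t with hp
  set p' := prox x t' with hp'
  have k1 := moreau_strongmin f hf prox hproxmin x t ht p'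
  have k2 := moreau_strongmin f hf prox hproxmin x t' ht' p
  set R := (p'-x)^2/(2*t) - (p-x)^2/(2*t) + (p-x)^2/(2*t') - (p'-x)^2/(2*t') with hR
  have hsum : (p'-p)^2/(4*t) ≤ R := by
    have hpos : 0 ≤ (p-p')^2/(4*t') := by positivity
    have e : (p'-p)^2 = (p-p')^2 := by ring
    rw [hR]; linarith [k1, k2, e.le, e.ge]
  have S1 : (p'-p)^2 ≤ R * (4*t) := by
    calc (p'-p)^2 = ((p'-p)^2/(4*t))*(4*t) := by field_simp
    _ ≤ R*(4*t) := mul_le_mul_of_nonneg_right hsum (by linarith)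
  have eR : R * (4*t) = 2*((p'-x)^2-(p-x)^2)*(t'-t)/t' := by
    rw [hR]; field_simp; ring
  have S2 : (p'-p)^2 * t' ≤ 2*((p'-x)^2-(p-x)^2)*(t'-t) := by
    have := mul_le_mul_of_nonneg_right (S1.trans_eq eR) ht'.le
    calc (p'-p)^2 * t' ≤ (2*((p'-x)^2-(p-x)^2)*(t'-t)/t') * t' := this
    _ = 2*((p'-x)^2-(p-x)^2)*(t'-t) := by field_simp
  have hD : 2*((p'-x)^2-(p-x)^2)*(t'-t) ≤
      2 * (|p' - p| * (|p' - p| + 2 * |p - x|)) * |t' - t| := by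
    have e1 : 2*((p'-x)^2-(p-x)^2)*(t'-t) = 2*(((p'-p)*(p'+p-2*x))*(t'-t)) := by ring
    rw [e1]
    have h1 : ((p'-p)*(p'+p-2*x))*(t'-t) ≤ |((p'-p)*(p'+p-2*x))*(t'-t)| := le_abs_self _
    have h2 : |((p'-p)*(p'+p-2*x))*(t'-t)| = |p' - p| * |p'+p-2*x| * |t' - t| := by
      rw [abs_mul, abs_mul]
    have h3 : |p'+p-2*x| ≤ |p' - p| + 2 * |p - x| := by
      have e2 : p'+p-2*x = (p'-p) + 2*(p-x) := by ring
      rw [e2]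
      calc |(p'-p) + 2*(p-x)| ≤ |p'-p| + |2*(p-x)| := abs_add_le _ _
      _ = |p' - p| + 2 * |p - x| := by rw [abs_mul]; norm_num
    nlinarith [abs_nonneg (p'-p), abs_nonneg (t'-t), abs_nonneg (p'+p-2*x),
      mul_le_mul_of_nonneg_right (mul_le_mul_of_nonneg_left h3 (abs_nonneg (p'-p))) (abs_nonneg (t'-t))]
  have S3 : 7*t*(p'-p)^2 ≤ 16 * (|p' - p| * (|p' - p| + 2 * |p - x|)) * |t' - t| := by
    have h8 : 7*t/8 * (p'-p)^2 ≤ t' * (p'-p)^2 :=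
      mul_le_mul_of_nonneg_right h7 (sq_nonneg _)
    have : (p'-p)^2 * t' = t' * (p'-p)^2 := by ring
    linarith [S2, hD]
  rw [le_div_iff₀ ht]
  set u := |p' - p|
  set a := |p - x|
  set h := |t' - t|
  have hu : 0 ≤ u := abs_nonneg _
  have ha : 0 ≤ a := abs_nonneg _
  have hh : 0 ≤ h := abs_nonneg _
  have hh8 : h ≤ t/8 := le_of_lt ht8
  have hu2 : u^2 = (p'-p)^2 := sq_abs _
  have e8 : 0 ≤ (t/8 - h) * u^2 := mul_nonneg (by linarith) (sq_nonneg u)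
  rw [← hu2] at S3
  have eS : 16*(u*(u+2*a))*h = 16*u^2*h + 32*u*a*h := by ring
  have e8' : 16*u^2*h ≤ 2*t*u^2 := by linarith [e8, sq_nonneg u]
  have S4 : 5*t*u^2 ≤ 32*u*a*h := by linarith
  rcases eq_or_lt_of_le hu with hu0 | hu0
  · rw [← hu0]
    have : 0 ≤ 7*a*h := by positivity
    linarith
  · have h5 : (5*t*u)*u ≤ (32*a*h)*u := by linarith [S4]
    have h6 : 5*t*u ≤ 32*a*h := le_of_mul_le_mul_right h5 hu0
    nlinarith [mul_nonneg ha hh]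

/-- Quadratic remainder bound in the `t` variable. -/
private lemma moreau_remt (f : ℝ → ℝ) (M : ℝ → ℝ → ℝ) (prox : ℝ → ℝ → ℝ)
    (hproxmin : ∀ x t, 0 < t →
      ∀ y : ℝ, f (prox x t) + (prox x t - x)^2/(2*t) ≤ f y + (y - x)^2/(2*t))
    (hMval : ∀ x t, 0 < t → M x t = f (prox x t) + (prox x t - x)^2/(2*t))
    (x t t' : ℝ) (ht : 0 < t) (ht8 : |t' - t| < t/8)
    (lipt : |prox x t' - prox x t| ≤ 7 * |prox x t - x| * |t' - t| / t) :
    |M x t' - M x t - (t'-t) * (-(x - prox x t)^2/(2*t^2))|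
      ≤ (22*(x - prox x t)^2/t^3) * (t'-t)^2 := by
  have habs := abs_lt.mp ht8
  have ht' : 0 < t' := by linarith
  have h7 : 7*t/8 ≤ t' := by linarith
  set p := prox x t with hp
  set p' := prox x t' with hp'
  set a := |p - x| with ha'
  set h := |t' - t| with hh'
  set C := 22*(x - p)^2/t^3 with hC
  have hu : 0 ≤ |p' - p| := abs_nonneg _
  have ha : 0 ≤ a := abs_nonneg _
  have hh : 0 ≤ h := abs_nonneg _
  have hh8 : h ≤ t/8 := le_of_lt ht8
  have ha2 : a^2 = (x - p)^2 := by rw [sq_abs]; ring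
  have hM1 := hMval x t ht
  have hM2 := hMval x t' ht'
  have hub : M x t' - M x t ≤ (p-x)^2/(2*t') - (p-x)^2/(2*t) := by
    rw [hM1, hM2]; linarith [hproxmin x t' ht' p]
  have hlb : (p'-x)^2/(2*t') - (p'-x)^2/(2*t) ≤ M x t' - M x t := by
    rw [hM1, hM2]; linarith [hproxmin x t ht p']
  have hu3a : |p' - p| ≤ a := by
    have h1 : 7*a*h ≤ 7*a*(t/8) := by nlinarith
    have h2 : 7*a*h/t ≤ (7*a*(t/8))/t := div_le_div_of_nonneg_right h1 ht.le
    have h3 : (7*a*(t/8))/t = 7*a/8 := by field_simp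
    calc |p' - p| ≤ 7*a*h/t := lipt
    _ ≤ 7*a/8 := by rw [← h3]; exact h2
    _ ≤ a := by linarith
  have hDabs : |(x-p)^2 - (p'-x)^2| ≤ |p' - p| * (|p' - p| + 2*a) := by
    have e : (x-p)^2 - (p'-x)^2 = (p - p')*(p + p' - 2*x) := by ring
    rw [e, abs_mul]
    have e2 : |p - p'| = |p' - p| := abs_sub_comm _ _
    rw [e2]
    apply mul_le_mul_of_nonneg_left _ hu
    calc |p + p' - 2*x| = |(p' - p) + 2*(p - x)| := by ring_nf
    _ ≤ |p' - p| + |2*(p - x)| := abs_add_le _ _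
    _ = |p' - p| + 2*a := by rw [abs_mul]; norm_num; rfl
  have hD2 : |(x-p)^2 - (p'-x)^2| ≤ (7*a*h/t) * (3*a) := by
    have : |p' - p| * (|p' - p| + 2*a) ≤ (7*a*h/t)*(3*a) := by
      have hl : 0 ≤ 7*a*h/t := by positivity
      nlinarith [lipt, hu3a, hu, ha]
    linarith [hDabs]
  have hD3 : t * |(x-p)^2 - (p'-x)^2| ≤ 21*a^2*h := by
    have e : t * ((7*a*h/t)*(3*a)) = 21*a^2*h := by field_simp; ring
    calc t * |(x-p)^2 - (p'-x)^2| ≤ t * ((7*a*h/t)*(3*a)) :=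
      mul_le_mul_of_nonneg_left hD2 ht.le
    _ = 21*a^2*h := e
  set B := (x-p)^2*(t'-t)/(2*t^2*t') + ((x-p)^2-(p'-x)^2)/(2*t*t') with hB'
  have eB : B * (2*t^2*t') = (x-p)^2*(t'-t) + t*((x-p)^2-(p'-x)^2) := by
    rw [hB']; field_simp
  have hBnum : |B * (2*t^2*t')| ≤ 22*(x-p)^2*h := by
    rw [eB]
    calc |(x-p)^2*(t'-t) + t*((x-p)^2-(p'-x)^2)|
        ≤ |(x-p)^2*(t'-t)| + |t*((x-p)^2-(p'-x)^2)| := abs_add_le _ _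
    _ = (x-p)^2 * h + t * |(x-p)^2-(p'-x)^2| := by
        rw [abs_mul, abs_mul, abs_of_nonneg (sq_nonneg (x-p)), abs_of_pos ht, hh']
    _ ≤ (x-p)^2 * h + 21*a^2*h := by linarith [hD3]
    _ = 22*(x-p)^2*h := by rw [ha2]; ring
  have h2t : t^3 ≤ 2*t^2*t' := by nlinarith [h7, sq_nonneg t, ht]
  have hBt : |B| * t^3 ≤ 22*(x-p)^2*h := by
    calc |B| * t^3 ≤ |B| * (2*t^2*t') := mul_le_mul_of_nonneg_left h2t (abs_nonneg B)
    _ = |B * (2*t^2*t')| := by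
        rw [abs_mul, abs_of_pos (by positivity : (0:ℝ) < 2*t^2*t')]
    _ ≤ 22*(x-p)^2*h := hBnum
  have hBle : |B| ≤ C * h := by
    have ht3 : (0:ℝ) < t^3 := by positivity
    have := (le_div_iff₀ ht3).mpr hBt
    have e : 22*(x-p)^2*h/t^3 = C * h := by rw [hC]; ring
    linarith [this, e.le, e.ge]
  rw [abs_le]
  constructor
  · have eL : (p'-x)^2/(2*t') - (p'-x)^2/(2*t) + (t'-t)*(x-p)^2/(2*t^2) = (t'-t)*B := by
      rw [hB']; field_simp; ring
    have key : (t'-t)*B ≤ M x t' - M x t - (t'-t) * (-(x - p)^2/(2*t^2)) := by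
      have e2 : M x t' - M x t - (t'-t) * (-(x - p)^2/(2*t^2))
          = M x t' - M x t + (t'-t)*(x-p)^2/(2*t^2) := by ring
      rw [e2, ← eL]; linarith [hlb]
    have hneg : -(h * |B|) ≤ (t'-t)*B := by
      have : |(t'-t)*B| = h * |B| := by rw [abs_mul, hh']
      linarith [neg_abs_le ((t'-t)*B), this.le, this.ge]
    have hfin : h * |B| ≤ C * (t'-t)^2 := by
      have h1 : h * |B| ≤ h * (C * h) := mul_le_mul_of_nonneg_left hBle hh
      have h2 : h * (C * h) = C * (t'-t)^2 := by
        rw [hh']; rw [mul_comm, mul_assoc, ← abs_mul, abs_of_nonneg (mul_self_nonneg _)]; ring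
      linarith [h1, h2.le, h2.ge]
    have step1 : -(C*(t'-t)^2) ≤ -(h * |B|) := by linarith [hfin]
    have step2 : -(C*(t'-t)^2) ≤ (t'-t)*B := le_trans step1 hneg
    exact le_trans step2 key
  · have eU : (p-x)^2/(2*t') - (p-x)^2/(2*t) + (t'-t)*(x-p)^2/(2*t^2)
        = (x-p)^2*(t'-t)^2/(2*t^2*t') := by field_simp; ring
    have key : M x t' - M x t - (t'-t) * (-(x - p)^2/(2*t^2))
        ≤ (x-p)^2*(t'-t)^2/(2*t^2*t') := by
      have e2 : M x t' - M x t - (t'-t) * (-(x - p)^2/(2*t^2))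
          = M x t' - M x t + (t'-t)*(x-p)^2/(2*t^2) := by ring
      rw [e2, ← eU]; linarith [hub]
    have hlast : (x-p)^2*(t'-t)^2/(2*t^2*t') ≤ C * (t'-t)^2 := by
      have h1 : (x-p)^2*(t'-t)^2/(2*t^2*t') ≤ (x-p)^2*(t'-t)^2/(t^3) := by
        apply div_le_div_of_nonneg_left (by positivity) (by positivity) h2t
      have h2 : C * (t'-t)^2 - (x-p)^2*(t'-t)^2/(t^3) = (21/t^3)*((x-p)^2*(t'-t)^2) := by
        rw [hC]; ring
      have h3 : 0 ≤ (21/t^3)*((x-p)^2*(t'-t)^2) := by positivity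
      linarith
    linarith

/-- Derivative from an eventual quadratic remainder bound. -/
private lemma moreau_deriv_of_quadbound (g : ℝ → ℝ) (x d K : ℝ)
    (hbound : ∀ᶠ x' in nhds x, |g x' - g x - (x'-x) * d| ≤ K * (x'-x)^2) :
    HasDerivAt g d x := by
  rw [hasDerivAt_iff_isLittleO]
  have h1 : (fun x' => g x' - g x - (x' - x) • d) =O[nhds x] (fun x' => (x'-x)^2) := by
    apply IsBigO.of_bound K
    filter_upwards [hbound] with x' hx'
    simpa [abs_of_nonneg (sq_nonneg (x'-x)), smul_eq_mul] using hx'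
  have h2 : (fun x' : ℝ => (x'-x)^2) =o[nhds x] (fun x' => x' - x) := by
    have h3 : (fun x' : ℝ => x' - x) =o[nhds x] (fun _ => (1:ℝ)) := by
      rw [isLittleO_one_iff]
      have : Filter.Tendsto (fun x' : ℝ => x' - x) (nhds x) (nhds (x - x)) :=
        (continuous_id.sub continuous_const).tendsto x
      simpa using this
    have := h3.mul_isBigO (isBigO_refl (fun x' : ℝ => x' - x) (nhds x))
    simpa [pow_two] using this
  exact h1.trans_isLittleO h2

end MoreauAux

/-- Derivatives of the Moreau envelope `M_f(x,t) = min_y [(x−y)²/(2t) + f(y)]`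
of a convex function `f`, in terms of the proximal operator:
`∂M/∂x = (x − prox_f(x,t))/t` and `∂M/∂t = −(x − prox_f(x,t))²/(2t²)`. -/
theorem stmt12 (f : ℝ → ℝ) (hf : ConvexOn ℝ Set.univ f)
    (M : ℝ → ℝ → ℝ)
    (hM : ∀ x t, M x t = ⨅ y : ℝ, ((x - y)^2/(2*t) + f y))
    (prox : ℝ → ℝ → ℝ)
    (hproxmin : ∀ x t, 0 < t →
      ∀ y : ℝ, f (prox x t) + (prox x t - x)^2/(2*t) ≤ f y + (y - x)^2/(2*t))
    (x t : ℝ) (ht : 0 < t) :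
    HasDerivAt (fun x' => M x' t) ((x - prox x t)/t) x ∧
    HasDerivAt (fun t' => M x t') (-(x - prox x t)^2/(2*t^2)) t := by
  have hMval : ∀ x t, 0 < t → M x t = f (prox x t) + (prox x t - x)^2/(2*t) :=
    fun x t ht => moreau_Mval f M hM prox hproxmin x t ht
  constructor
  · apply moreau_deriv_of_quadbound (fun x' => M x' t) x ((x - prox x t)/t) (2/t)
    filter_upwards with x'
    exact moreau_remx f M prox hproxmin hMval x x' t ht
      (moreau_lipx f hf prox hproxmin x x' t ht)
  · apply moreau_deriv_of_quadbound (fun t' => M x t') t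
      (-(x - prox x t)^2/(2*t^2)) (22*(x - prox x t)^2/t^3)
    have hball : ∀ᶠ t' in nhds t, |t' - t| < t/8 := by
      filter_upwards [Metric.ball_mem_nhds t (show (0:ℝ) < t/8 by positivity)] with t' ht'
      simpa [Real.dist_eq] using ht'
    filter_upwards [hball] with t' ht8
    exact moreau_remt f M prox hproxmin hMval x t t' ht ht8
      (moreau_lipt f hf prox hproxmin x t t' ht ht8)
end

section
/- Let Z ∼ N(0,1), a > 0, and μ ≥ 0, and let S_t(x) = sgn(x)·max(|x| − t, 0) be the soft-threshold operator. Then E[(S_μ(aZ))²] = (μ² + a²)(1 − erf(μ/(√2·a))) − a·μ·√(2/π)·exp(−μ²/(2a²)). -/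
open MeasureTheory ProbabilityTheory Real

/-- The Gauss error function. -/
noncomputable def erf (x : ℝ) : ℝ := (2 / Real.sqrt π) * ∫ t in (0:ℝ)..x, Real.exp (-t^2)

/-- Soft thresholding at level `t`. -/
noncomputable def softT (t x : ℝ) : ℝ := Real.sign x * max (|x| - t) 0

open Filter
open scoped ENNReal NNReal

private lemma erf_hasDerivAt (x : ℝ) : HasDerivAt erf (2 / Real.sqrt π * Real.exp (-x^2)) x := by
  have h : HasDerivAt (fun u => ∫ t in (0:ℝ)..u, Real.exp (-t^2)) (Real.exp (-x^2)) x :=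
    intervalIntegral.integral_hasDerivAt_right
      ((Real.continuous_exp.comp (continuous_neg.comp (continuous_pow 2))).intervalIntegrable _ _)
      ((Real.continuous_exp.comp (continuous_neg.comp (continuous_pow 2))).stronglyMeasurableAtFilter _ _)
      (Continuous.continuousAt (by continuity))
  exact h.const_mul (2 / Real.sqrt π)

private lemma erf_tendsto : Tendsto erf atTop (nhds 1) := by
  have h := intervalIntegral_tendsto_integral_Ioi (μ := volume) 0
    ((integrable_exp_neg_mul_sq (by norm_num : (0:ℝ) < 1)).integrableOn) tendsto_id
  have h2 : (∫ t in Set.Ioi (0:ℝ), Real.exp (-1 * t^2)) = Real.sqrt π / 2 := by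
    simpa using integral_gaussian_Ioi 1
  have h3 : Tendsto (fun x => (2 / Real.sqrt π) * ∫ t in (0:ℝ)..x, Real.exp (-1*t^2))
      atTop (nhds ((2 / Real.sqrt π) * (Real.sqrt π / 2))) := by
    rw [← h2]; exact h.const_mul _
  have hπ : Real.sqrt π ≠ 0 := by positivity
  have : (2 / Real.sqrt π) * (Real.sqrt π / 2) = 1 := by field_simp
  rw [this] at h3
  convert h3 using 2 with x
  simp [erf]

/-- standard normal density -/
private noncomputable def P (x : ℝ) : ℝ := (Real.sqrt (2*π))⁻¹ * Real.exp (-x^2/2)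

/-- antiderivative of `(a x - μ)² P x` -/
private noncomputable def G (a μ x : ℝ) : ℝ :=
  (a^2+μ^2) * ((1/2) * (1 + erf (x/Real.sqrt 2)))
    - (Real.sqrt (2*π))⁻¹ * (a^2 * x * Real.exp (-x^2/2))
    + (Real.sqrt (2*π))⁻¹ * (2*a*μ * Real.exp (-x^2/2))

private lemma exp_hasDerivAt (x : ℝ) :
    HasDerivAt (fun x : ℝ => Real.exp (-x^2/2)) (-x * Real.exp (-x^2/2)) x := by
  have h : HasDerivAt (fun x : ℝ => -x^2/2) (-x) x := by
    have := ((hasDerivAt_pow 2 x).neg).div_const 2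
    exact this.congr_deriv (by norm_num; ring)
  simpa [mul_comm] using h.exp

private lemma sqrt_two_pi : Real.sqrt (2*π) = Real.sqrt 2 * Real.sqrt π :=
  Real.sqrt_mul (by norm_num) _

private lemma G_hasDerivAt (a μ x : ℝ) :
    HasDerivAt (G a μ) ((a*x-μ)^2 * P x) x := by
  have h1 : HasDerivAt (fun x : ℝ => erf (x / Real.sqrt 2))
      (2 / Real.sqrt π * Real.exp (-x^2/2) * (1 / Real.sqrt 2)) x := by
    have hinner : HasDerivAt (fun x : ℝ => x / Real.sqrt 2) (1 / Real.sqrt 2) x := by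
      simpa using (hasDerivAt_id x).div_const (Real.sqrt 2)
    have h := (erf_hasDerivAt (x / Real.sqrt 2)).comp x hinner
    have harg : -(x / Real.sqrt 2)^2 = -x^2/2 := by
      rw [div_pow, Real.sq_sqrt (by norm_num : (0:ℝ) ≤ 2)]
      ring
    rw [harg] at h
    exact h
  have h2 : HasDerivAt (fun x : ℝ => a^2 * x * Real.exp (-x^2/2))
      (a^2 * Real.exp (-x^2/2) + a^2 * x * (-x * Real.exp (-x^2/2))) x := by
    have hx : HasDerivAt (fun x : ℝ => a^2 * x) (a^2) x := by
      simpa using (hasDerivAt_id x).const_mul (a^2)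
    exact (hx.mul (exp_hasDerivAt x)).congr_deriv (by ring)
  have h3 := (exp_hasDerivAt x).const_mul (2*a*μ)
  have hG := ((((h1.const_add 1).const_mul (1/2)).const_mul (a^2+μ^2)).sub
      (h2.const_mul (Real.sqrt (2*π))⁻¹)).add (h3.const_mul (Real.sqrt (2*π))⁻¹)
  refine hG.congr_deriv ?_
  symm
  unfold P
  rw [sqrt_two_pi]
  have hπ : Real.sqrt π ≠ 0 := by positivity
  have h2' : Real.sqrt 2 ≠ 0 := by positivity
  field_simp
  ring_nf

private lemma exp_tendsto_zero : Tendsto (fun x : ℝ => Real.exp (-x^2/2)) atTop (nhds 0) := by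
  apply Real.tendsto_exp_atBot.comp
  have : Tendsto (fun x : ℝ => x^2/2) atTop atTop :=
    (tendsto_pow_atTop (by norm_num)).atTop_div_const (by norm_num)
  have h2 := tendsto_neg_atTop_atBot.comp this
  simpa [neg_div, Function.comp_def] using h2

private lemma mul_exp_tendsto_zero :
    Tendsto (fun x : ℝ => x * Real.exp (-x^2/2)) atTop (nhds 0) := by
  have h := (rpow_mul_exp_neg_mul_sq_isLittleO_exp_neg (b := 1/2) (by norm_num) 1).isBigO.trans_tendsto
    (Real.tendsto_exp_atBot.comp (tendsto_id.const_mul_atTop_of_neg (by norm_num) |>.mono_left le_rfl))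
  have heq : (fun x : ℝ => x ^ (1:ℝ) * Real.exp (-(1/2) * x ^ 2)) =ᶠ[atTop]
      (fun x : ℝ => x * Real.exp (-x^2/2)) := by
    filter_upwards with x
    rw [Real.rpow_one]; ring_nf
  exact h.congr' heq

private lemma G_tendsto (a μ : ℝ) : Tendsto (G a μ) atTop (nhds (a^2+μ^2)) := by
  have h1 : Tendsto (fun x : ℝ => erf (x / Real.sqrt 2)) atTop (nhds 1) :=
    erf_tendsto.comp (tendsto_id.atTop_div_const (by positivity))
  have h2 : Tendsto (fun x : ℝ => (Real.sqrt (2*π))⁻¹ * (a^2 * x * Real.exp (-x^2/2)))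
      atTop (nhds 0) := by
    have := ((mul_exp_tendsto_zero.const_mul (a^2)).const_mul (Real.sqrt (2*π))⁻¹)
    simpa [mul_assoc] using this
  have h3 : Tendsto (fun x : ℝ => (Real.sqrt (2*π))⁻¹ * (2*a*μ * Real.exp (-x^2/2)))
      atTop (nhds 0) := by
    have := ((exp_tendsto_zero.const_mul (2*a*μ)).const_mul (Real.sqrt (2*π))⁻¹)
    simpa [mul_assoc] using this
  have := (((((h1.const_add 1).const_mul (1/2)).const_mul (a^2+μ^2)).sub h2).add h3)
  have e : (a ^ 2 + μ ^ 2) * (1 / 2 * (1 + 1)) - 0 + 0 = a^2+μ^2 := by norm_num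
  rw [e] at this
  exact this

private lemma integrable_poly (a μ : ℝ) : Integrable (fun x : ℝ => (a*x-μ)^2 * P x) := by
  have e0 : Integrable (fun x : ℝ => Real.exp (-(1/2:ℝ)*x^2)) :=
    integrable_exp_neg_mul_sq (by norm_num)
  have e1 : Integrable (fun x : ℝ => x * Real.exp (-(1/2:ℝ)*x^2)) :=
    integrable_mul_exp_neg_mul_sq (by norm_num)
  have e2 : Integrable (fun x : ℝ => x^2 * Real.exp (-(1/2:ℝ)*x^2)) := by
    have h := integrable_rpow_mul_exp_neg_mul_sq (b := 1/2) (by norm_num) (s := 2) (by norm_num)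
    have : ∀ x : ℝ, x ^ (2:ℝ) = x ^ 2 := fun x => by
      rw [show ((2:ℝ) = ((2:ℕ):ℝ)) by norm_num, Real.rpow_natCast]
    simpa [this] using h
  have := ((((e2.const_mul (a^2)).sub (e1.const_mul (2*a*μ))).add
    (e0.const_mul (μ^2))).const_mul (Real.sqrt (2*π))⁻¹)
  apply this.congr
  filter_upwards with x
  simp only [Pi.add_apply, Pi.sub_apply]
  unfold P
  rw [show ∀ y : ℝ, -y^2/2 = -(1/2:ℝ)*y^2 from fun y => by ring]
  ring

private lemma sq_softT (μ : ℝ) (hμ : 0 ≤ μ) (x : ℝ) :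
    (softT μ x)^2 = (max (|x| - μ) 0)^2 := by
  rcases lt_trichotomy x 0 with h|h|h
  · rw [softT, Real.sign_of_neg h]; ring
  · subst h
    rw [softT, Real.sign_zero, abs_zero, max_eq_right (by linarith)]
    ring
  · rw [softT, Real.sign_of_pos h]; ring

private lemma pdf_eq (x : ℝ) : gaussianPDFReal 0 1 x = P x := by
  simp [gaussianPDFReal, P]

private lemma integral_gauss (f : ℝ → ℝ) :
    ∫ x, f x ∂(gaussianReal 0 1) = ∫ x, gaussianPDFReal 0 1 x * f x := by
  rw [gaussianReal_of_var_ne_zero 0 one_ne_zero]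
  have hd : (gaussianPDF 0 1) = fun x => ((gaussianPDFReal 0 1 x).toNNReal : ℝ≥0∞) := rfl
  rw [hd, integral_withDensity_eq_integral_smul
    ((measurable_gaussianPDFReal 0 1).real_toNNReal) f]
  congr 1; funext x
  simp [NNReal.smul_def, Real.coe_toNNReal _ (gaussianPDFReal_nonneg 0 1 x)]

/-- Second moment of the soft-thresholded Gaussian:
`E[(S_μ(aZ))²] = (μ² + a²)(1 − erf(μ/(√2·a))) − aμ√(2/π)·e^{−μ²/(2a²)}`. -/
theorem stmt14 (a μ : ℝ) (ha : 0 < a) (hμ : 0 ≤ μ) :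
    ∫ z, (softT μ (a*z))^2 ∂(gaussianReal 0 1)
      = (μ^2 + a^2) * (1 - erf (μ/(Real.sqrt 2 * a)))
        - a * μ * Real.sqrt (2/π) * Real.exp (-μ^2/(2*a^2)) := by
  have ha' : a ≠ 0 := ne_of_gt ha
  set c := μ / a with hcdef
  have hc : 0 ≤ c := div_nonneg hμ ha.le
  have hac : a * c = μ := by rw [hcdef]; field_simp
  set Q : ℝ → ℝ := fun t => (max (a*t - μ) 0)^2 * P t with hQdef
  have key : ∀ x, gaussianPDFReal 0 1 x * (softT μ (a*x))^2 = Q |x| := by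
    intro x
    have hP : P |x| = P x := by unfold P; rw [sq_abs]
    rw [pdf_eq, sq_softT μ hμ]
    simp only [hQdef, abs_mul, abs_of_pos ha, hP]
    ring
  rw [integral_gauss]
  calc ∫ x, gaussianPDFReal 0 1 x * (softT μ (a*x))^2
      = ∫ x, Q |x| := by congr 1; funext x; exact key x
    _ = 2 * ∫ t in Set.Ioi (0:ℝ), Q t := integral_comp_abs
    _ = (μ^2 + a^2) * (1 - erf (μ/(Real.sqrt 2 * a)))
        - a * μ * Real.sqrt (2/π) * Real.exp (-μ^2/(2*a^2)) := by
      have hQ0 : Set.EqOn Q (fun _ => (0:ℝ)) (Set.Ioc 0 c) := by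
        intro t ht
        have : a * t ≤ μ := by
          rw [← hac]; exact mul_le_mul_of_nonneg_left ht.2 ha.le
        simp only [hQdef]
        rw [max_eq_right (by linarith)]
        ring
      have hQIoi : Set.EqOn Q (fun t => (a*t-μ)^2 * P t) (Set.Ioi c) := by
        intro t ht
        have : μ ≤ a * t := by
          rw [← hac]; exact mul_le_mul_of_nonneg_left (le_of_lt ht) ha.le
        simp only [hQdef]
        rw [max_eq_left (by linarith)]
      have hint2 : IntegrableOn Q (Set.Ioi c) :=
        ((integrable_poly a μ).integrableOn).congr_fun
          (fun t ht => (hQIoi ht).symm) measurableSet_Ioi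
      have hint1 : IntegrableOn Q (Set.Ioc 0 c) :=
        (integrableOn_zero).congr_fun (fun t ht => (hQ0 ht).symm) measurableSet_Ioc
      have hsplit : ∫ t in Set.Ioi (0:ℝ), Q t
          = (∫ t in Set.Ioc 0 c, Q t) + ∫ t in Set.Ioi c, Q t := by
        rw [← setIntegral_union (Set.Ioc_disjoint_Ioi le_rfl) measurableSet_Ioi hint1 hint2,
          Set.Ioc_union_Ioi_eq_Ioi hc]
      have hzero : ∫ t in Set.Ioc 0 c, Q t = 0 := by
        rw [setIntegral_congr_fun measurableSet_Ioc hQ0]; simp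
      have hIoi : ∫ t in Set.Ioi c, Q t = (a^2+μ^2) - G a μ c := by
        rw [setIntegral_congr_fun measurableSet_Ioi hQIoi]
        exact integral_Ioi_of_hasDerivAt_of_tendsto' (fun x _ => G_hasDerivAt a μ x)
          (integrable_poly a μ).integrableOn (G_tendsto a μ)
      rw [hsplit, hzero, hIoi, zero_add]
      -- final algebra
      have hS : Real.sqrt (2/π) = 2 * (Real.sqrt (2*π))⁻¹ := by
        rw [Real.sqrt_div (by norm_num : (0:ℝ) ≤ 2) π,
          Real.sqrt_mul (by norm_num : (0:ℝ) ≤ 2) π, mul_inv]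
        rw [show ((Real.sqrt 2)⁻¹ : ℝ) = Real.sqrt 2 / 2 by
          rw [eq_div_iff (by norm_num), inv_mul_eq_div, Real.div_sqrt]]
        have hπ : Real.sqrt π ≠ 0 := by positivity
        field_simp
      have harg1 : c / Real.sqrt 2 = μ / (Real.sqrt 2 * a) := by
        rw [hcdef, div_div, mul_comm]
      have harg2 : -c^2/2 = -μ^2/(2*a^2) := by
        rw [hcdef]; field_simp
      unfold G
      rw [harg1, harg2, hS, ← hac]
      ring
end

section
/- Let Z ∼ N(0,1), a > 0, b ≥ 0, and let H(x, y) = x²/2 if |x| ≤ y and y(|x| − y/2) otherwise be the Huber loss. Then E[H(aZ, b)] = ((a² + b²)/2)·erf(b/(√2·a)) − b²/2 + (a·b/√(2π))·exp(−b²/(2a²)). -/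
open MeasureTheory ProbabilityTheory Real

/-- The Huber loss with threshold `y`. -/
noncomputable def huber (x y : ℝ) : ℝ := if |x| ≤ y then x^2/2 else y*(|x| - y/2)

open Set Filter

private lemma gauss_step0 (g : ℝ → ℝ) :
    ∫ z, g z ∂(gaussianReal 0 1) = ∫ z, gaussianPDFReal 0 1 z * g z := by
  rw [gaussianReal_of_var_ne_zero _ one_ne_zero]
  have : (gaussianPDF (0:ℝ) 1) = fun x => ((gaussianPDFReal 0 1 x).toNNReal : ENNReal) := by
    funext x; rfl
  rw [this, integral_withDensity_eq_integral_smul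
    ((measurable_gaussianPDFReal 0 1).real_toNNReal)]
  congr 1; funext x
  simp [NNReal.smul_def, Real.coe_toNNReal _ (gaussianPDFReal_nonneg 0 1 x)]

private lemma gauss_pdf_eq (z : ℝ) :
    gaussianPDFReal 0 1 z = (Real.sqrt (2*π))⁻¹ * Real.exp (-z^2/2) := by
  simp [gaussianPDFReal]

private lemma gauss_L1 (c : ℝ) : ∫ t in (0:ℝ)..c, Real.exp (-t^2/2)
    = Real.sqrt 2 * ∫ x in (0:ℝ)..(c / Real.sqrt 2), Real.exp (-x^2) := by
  have h2 : (Real.sqrt 2) ≠ 0 := by positivity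
  have key := intervalIntegral.integral_comp_div (a := (0:ℝ)) (b := c)
    (f := fun u => Real.exp (-u^2)) h2
  simp only [zero_div, smul_eq_mul] at key
  rw [← key]
  apply intervalIntegral.integral_congr
  intro t _
  simp only [div_pow, Real.sq_sqrt (by norm_num : (0:ℝ) ≤ 2)]
  ring_nf

private lemma gauss_L2 (c : ℝ) :
    ∫ t in (0:ℝ)..c, (t^2 * Real.exp (-t^2/2) - Real.exp (-t^2/2))
    = -c * Real.exp (-c^2/2) := by
  have h : ∀ t : ℝ, HasDerivAt (fun z => -z * Real.exp (-z^2/2))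
      (t^2 * Real.exp (-t^2/2) - Real.exp (-t^2/2)) t := by
    intro t
    have h1 : HasDerivAt (fun z : ℝ => -z^2/2) (-t) t := by
      have := ((hasDerivAt_pow 2 t).neg).div_const 2
      exact this.congr_deriv (by norm_num; ring)
    have h2 : HasDerivAt (fun z : ℝ => Real.exp (-z^2/2)) (Real.exp (-t^2/2) * (-t)) t :=
      (Real.hasDerivAt_exp _).comp t h1
    have h3 := (hasDerivAt_neg t).mul h2
    exact h3.congr_deriv (by ring)
  have key := intervalIntegral.integral_eq_sub_of_hasDerivAt (a := 0) (b := c)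
    (f := fun z => -z * Real.exp (-z^2/2)) (fun t _ => h t)
    (by apply Continuous.intervalIntegrable; continuity)
  rw [key]; ring

private lemma gauss_intE : Integrable (fun t : ℝ => Real.exp (-t^2/2)) := by
  have := integrable_exp_neg_mul_sq (by norm_num : (0:ℝ) < 1/2)
  convert this using 2 with t
  ring_nf

private lemma gauss_intTE : Integrable (fun t : ℝ => t * Real.exp (-t^2/2)) := by
  have := integrable_mul_exp_neg_mul_sq (by norm_num : (0:ℝ) < 1/2)
  convert this using 2 with t
  ring_nf

private lemma gauss_L3 (c : ℝ) :
    ∫ t in Ioi c, t * Real.exp (-t^2/2) = Real.exp (-c^2/2) := by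
  have h : ∀ t : ℝ, HasDerivAt (fun z => -Real.exp (-z^2/2)) (t * Real.exp (-t^2/2)) t := by
    intro t
    have h1 : HasDerivAt (fun z : ℝ => -z^2/2) (-t) t := by
      have := ((hasDerivAt_pow 2 t).neg).div_const 2
      exact this.congr_deriv (by norm_num; ring)
    have h2 : HasDerivAt (fun z : ℝ => Real.exp (-z^2/2)) (Real.exp (-t^2/2) * (-t)) t :=
      (Real.hasDerivAt_exp _).comp t h1
    have h3 := h2.neg
    exact h3.congr_deriv (by ring)
  have htend : Tendsto (fun z : ℝ => -Real.exp (-z^2/2)) atTop (nhds 0) := by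
    rw [← neg_zero]
    apply Tendsto.neg
    apply Real.tendsto_exp_atBot.comp
    apply Tendsto.atBot_div_const (by norm_num : (0:ℝ) < 2)
    exact tendsto_neg_atTop_atBot.comp (tendsto_pow_atTop (two_ne_zero))
  have key := integral_Ioi_of_hasDerivAt_of_tendsto' (a := c)
    (f' := fun t => t * Real.exp (-t^2/2)) (fun t _ => h t)
    (gauss_intTE.integrableOn) htend
  rw [key]; simp

private lemma gauss_L4 (c : ℝ) (hc : 0 ≤ c) : ∫ t in Ioi c, Real.exp (-t^2/2)
    = Real.sqrt (2*π)/2 - ∫ t in (0:ℝ)..c, Real.exp (-t^2/2) := by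
  have hsplit : (∫ t in Ioc 0 c, Real.exp (-t^2/2)) + ∫ t in Ioi c, Real.exp (-t^2/2)
      = ∫ t in Ioi (0:ℝ), Real.exp (-t^2/2) := by
    rw [← setIntegral_union (Ioc_disjoint_Ioi le_rfl) measurableSet_Ioi
      gauss_intE.integrableOn gauss_intE.integrableOn, Ioc_union_Ioi_eq_Ioi hc]
  have hIoi0 : ∫ t in Ioi (0:ℝ), Real.exp (-t^2/2) = Real.sqrt (2*π)/2 := by
    have := integral_gaussian_Ioi (1/2)
    have he : ∀ t : ℝ, Real.exp (-(1/2) * t^2) = Real.exp (-t^2/2) := by intro t; ring_nf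
    simp_rw [he] at this
    rw [this]
    rw [show π / (1/2) = 2*π by ring]
  rw [intervalIntegral.integral_of_le hc]
  linarith [hsplit, hIoi0]

set_option maxHeartbeats 1000000 in
/-- Gaussian expectation of the Huber loss:
`E[H(aZ, b)] = ((a²+b²)/2)·erf(b/(√2·a)) − b²/2 + (ab/√(2π))·e^{−b²/(2a²)}`. -/
theorem stmt15 (a b : ℝ) (ha : 0 < a) (hb : 0 ≤ b) :
    ∫ z, huber (a*z) b ∂(gaussianReal 0 1)
      = ((a^2 + b^2)/2) * erf (b/(Real.sqrt 2 * a)) - b^2/2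
        + (a*b/Real.sqrt (2*π)) * Real.exp (-b^2/(2*a^2)) := by
  have ha' : a ≠ 0 := ne_of_gt ha
  have hπ : (0:ℝ) < π := Real.pi_pos
  set c : ℝ := b / a with hcdef
  have hc : 0 ≤ c := div_nonneg hb ha.le
  have hac : a * c = b := by rw [hcdef]; field_simp
  set K : ℝ := (Real.sqrt (2*π))⁻¹ with hK
  have hKpos : 0 < K := by rw [hK]; positivity
  set E : ℝ := ∫ x in (0:ℝ)..(c / Real.sqrt 2), Real.exp (-x^2) with hE
  -- measurability of huber composed
  have hmeas : Measurable (fun z : ℝ => huber (a*z) b) := by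
    unfold huber
    exact Measurable.ite
      (measurableSet_le ((measurable_id.const_mul a).abs) measurable_const)
      (((measurable_id.const_mul a).pow_const 2).div_const 2)
      (((measurable_id.const_mul a).abs.sub measurable_const).const_mul b)
  have habs : ∀ z : ℝ, |a*z| = a * |z| := fun z => by
    rw [abs_mul, abs_of_pos ha]
  -- bound on huber
  have hbound : ∀ z : ℝ, |huber (a*z) b| ≤ a*b*|z| := by
    intro z
    unfold huber
    split_ifs with h
    · rw [abs_of_nonneg (by positivity)]
      rw [habs z] at h
      have h4 : (a*z)^2 = (a*|z|)^2 := by rw [mul_pow, mul_pow, sq_abs]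
      have h5 : (0:ℝ) ≤ a * |z| := mul_nonneg ha.le (abs_nonneg z)
      nlinarith [mul_le_mul_of_nonneg_right h h5,
        mul_nonneg (mul_nonneg ha.le hb) (abs_nonneg z)]
    · push_neg at h
      have h1 : 0 ≤ |a*z| - b/2 := by linarith
      rw [abs_of_nonneg (mul_nonneg hb h1), habs z] at *
      nlinarith [abs_nonneg z, mul_nonneg hb hb]
  -- integrability
  have hint : Integrable (fun z : ℝ => K * Real.exp (-z^2/2) * huber (a*z) b) := by
    apply Integrable.mono (gauss_intTE.abs.const_mul (a*b*K))
    · exact ((((measurable_id.pow_const 2).neg.div_const 2).exp.const_mul K).mul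
        hmeas).aestronglyMeasurable
    · filter_upwards with z
      have he : (0:ℝ) < Real.exp (-z^2/2) := Real.exp_pos _
      have h1 : ‖K * Real.exp (-z^2/2) * huber (a*z) b‖
          = K * Real.exp (-z^2/2) * |huber (a*z) b| := by
        rw [Real.norm_eq_abs, abs_mul, abs_mul, abs_of_pos hKpos, abs_of_pos he]
      have h2 : ‖a*b*K * |z * Real.exp (-z^2/2)|‖
          = a*b*K*(|z| * Real.exp (-z^2/2)) := by
        rw [Real.norm_eq_abs, abs_mul, abs_of_nonneg (by positivity : (0:ℝ) ≤ a*b*K),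
          abs_abs, abs_mul, abs_of_pos he]
      rw [h1, h2]
      calc K * Real.exp (-z^2/2) * |huber (a*z) b|
          ≤ K * Real.exp (-z^2/2) * (a*b*|z|) :=
            mul_le_mul_of_nonneg_left (hbound z) (by positivity)
        _ = a*b*K*(|z| * Real.exp (-z^2/2)) := by ring
  -- reduce to Lebesgue integral and symmetrize
  rw [gauss_step0]
  have hpdfh : (fun z => gaussianPDFReal 0 1 z * huber (a*z) b)
      = fun z => (fun t => K * Real.exp (-t^2/2) * huber (a*t) b) |z| := by
    funext z
    simp only
    rw [gauss_pdf_eq]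
    have h1 : Real.exp (-z^2/2) = Real.exp (-|z|^2/2) := by rw [sq_abs]
    have h2 : huber (a*z) b = huber (a*|z|) b := by
      unfold huber
      have h3 : abs (a * abs z) = abs (a*z) := by rw [abs_mul, abs_mul, abs_abs]
      simp only [h3, mul_pow, sq_abs]
    rw [h1, h2, hK]
  have hsym : ∫ z, gaussianPDFReal 0 1 z * huber (a*z) b
      = 2 * ∫ x in Ioi (0:ℝ), K * Real.exp (-x^2/2) * huber (a*x) b := by
    rw [hpdfh]
    exact integral_comp_abs (f := fun t => K * Real.exp (-t^2/2) * huber (a*t) b)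
  rw [hsym]
  -- split the half-line integral at c
  have hsplit : ∫ x in Ioi (0:ℝ), K * Real.exp (-x^2/2) * huber (a*x) b
      = (∫ x in Ioc 0 c, K * Real.exp (-x^2/2) * huber (a*x) b)
        + ∫ x in Ioi c, K * Real.exp (-x^2/2) * huber (a*x) b := by
    rw [← setIntegral_union (Ioc_disjoint_Ioi le_rfl) measurableSet_Ioi
      hint.integrableOn hint.integrableOn, Ioc_union_Ioi_eq_Ioi hc]
  rw [hsplit]
  -- first piece
  have hpart1 : ∫ x in Ioc 0 c, K * Real.exp (-x^2/2) * huber (a*x) b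
      = K*a^2/2 * (Real.sqrt 2 * E - c * Real.exp (-c^2/2)) := by
    rw [setIntegral_congr_fun measurableSet_Ioc
      (g := fun x => (K*a^2/2) * (x^2 * Real.exp (-x^2/2)))
      (by
        intro x hx
        have hx1 : 0 < x := hx.1
        have hx2 : x ≤ c := hx.2
        have hax : |a*x| ≤ b := by
          rw [abs_of_pos (mul_pos ha hx1), ← hac]
          exact mul_le_mul_of_nonneg_left hx2 ha.le
        simp only
        unfold huber
        rw [if_pos hax]
        ring)]
    rw [← intervalIntegral.integral_of_le hc, intervalIntegral.integral_const_mul]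
    have hA : ∫ x in (0:ℝ)..c, x^2 * Real.exp (-x^2/2)
        = Real.sqrt 2 * E - c * Real.exp (-c^2/2) := by
      have hcont1 : Continuous (fun x : ℝ => Real.exp (-x^2/2)) :=
        Real.continuous_exp.comp (((continuous_pow 2).neg).div_const 2)
      have hcont2 : Continuous (fun x : ℝ => x^2 * Real.exp (-x^2/2) - Real.exp (-x^2/2)) :=
        ((continuous_pow 2).mul hcont1).sub hcont1
      have h3 : ∫ x in (0:ℝ)..c, x^2 * Real.exp (-x^2/2)
          = (∫ x in (0:ℝ)..c, (x^2 * Real.exp (-x^2/2) - Real.exp (-x^2/2)))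
            + ∫ x in (0:ℝ)..c, Real.exp (-x^2/2) := by
        rw [← intervalIntegral.integral_add
          (hcont2.intervalIntegrable _ _) (hcont1.intervalIntegrable _ _)]
        apply intervalIntegral.integral_congr
        intro x _; ring
      rw [h3, gauss_L2 c, gauss_L1 c, ← hE]; ring
    rw [hA]
  -- second piece
  have hpart2 : ∫ x in Ioi c, K * Real.exp (-x^2/2) * huber (a*x) b
      = K*a*b * Real.exp (-c^2/2)
        - K*b^2/2 * (Real.sqrt (2*π)/2 - Real.sqrt 2 * E) := by
    rw [setIntegral_congr_fun measurableSet_Ioi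
      (g := fun x => (K*a*b) * (x * Real.exp (-x^2/2)) - (K*b^2/2) * Real.exp (-x^2/2))
      (by
        intro x hx
        have hx1 : c < x := hx
        have hxpos : 0 ≤ x := le_trans hc hx1.le
        have hax : b < |a*x| := by
          rw [abs_of_nonneg (mul_nonneg ha.le hxpos), ← hac]
          exact mul_lt_mul_of_pos_left hx1 ha
        simp only
        unfold huber
        rw [if_neg (not_le.mpr hax), abs_of_nonneg (mul_nonneg ha.le hxpos)]
        ring)]
    rw [integral_sub ((gauss_intTE.const_mul (K*a*b)).integrableOn)
      ((gauss_intE.const_mul (K*b^2/2)).integrableOn),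
      integral_const_mul, integral_const_mul, gauss_L3 c, gauss_L4 c hc,
      gauss_L1 c, ← hE]
  rw [hpart1, hpart2]
  -- final algebra
  have harg : b/(Real.sqrt 2 * a) = c / Real.sqrt 2 := by
    rw [hcdef, div_div, mul_comm a]
  have hexp : -b^2/(2*a^2) = -c^2/2 := by
    rw [hcdef, div_pow]
    field_simp
  rw [harg, hexp, erf, ← hE, hK]
  have hsq : Real.sqrt (2*π) = Real.sqrt 2 * Real.sqrt π :=
    Real.sqrt_mul (by norm_num) π
  have hs2 : (0:ℝ) < Real.sqrt 2 := by positivity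
  have hsp : (0:ℝ) < Real.sqrt π := Real.sqrt_pos.mpr hπ
  rw [hsq, hcdef]
  field_simp
  ring
end
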